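/- Properties of the HLL flux (Theorem 2.10): Let d ∈ {1,2,3}, let U⁻, U⁺ ∈ 𝒢 with magnetic fields B⁻, B⁺, and let ξ ∈ ℝ^d be a unit vector. Assume the wave speeds satisfy σ_r ≥ α_r(U⁺, U⁻; ξ) and σ_l ≤ α_l(U⁻, U⁺; ξ), and set σ⁺ = max{σ_r, 0}, σ⁻ = min{σ_l, 0}. Then σ⁺ − σ⁻ > 0, and: (i) F̂(U⁻, U⁺; ξ) = σ⁻·H(U⁻, U⁺; ξ) + ⟨ξ, F(U⁻)⟩ − σ⁻U⁻ and F̂(U⁻, U⁺; ξ) = σ⁺·H(U⁻, U⁺; ξ) + ⟨ξ, F(U⁺)⟩ − σ⁺U⁺; (ii) the intermediate state H = H(U⁻, U⁺; ξ) has positive density component; (iii) for all v*, B* ∈ ℝ³, H·n* + |B*|²/2 + (v*·B*)(σ⁺ − σ⁻)⁻¹(⟨ξ, B⁺⟩ − ⟨ξ, B⁻⟩) ≥ 0; (iv) if ⟨ξ, B⁺⟩ = ⟨ξ, B⁻⟩ then H ∈ cl(𝒢*). -/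

import Mathlib

noncomputable section

open Finset

/-- An MHD state `U = (ρ, m, B, E)` viewed as a vector in `ℝ⁸`. -/
abbrev MHDState := Fin 8 → ℝ

namespace MHD

/-- Build a state from density, momentum, magnetic field, total energy. -/
def mk (ρ : ℝ) (m B : Fin 3 → ℝ) (E : ℝ) : MHDState :=
  ![ρ, m 0, m 1, m 2, B 0, B 1, B 2, E]

/-- Density component. -/
def dens (U : MHDState) : ℝ := U 0

/-- Momentum components. -/
def mom (U : MHDState) : Fin 3 → ℝ := ![U 1, U 2, U 3]

/-- Magnetic field components. -/
def magB (U : MHDState) : Fin 3 → ℝ := ![U 4, U 5, U 6]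

/-- Total energy component. -/
def toten (U : MHDState) : ℝ := U 7

/-- Euclidean dot product on `ℝ³`. -/
def dot3 (a b : Fin 3 → ℝ) : ℝ := ∑ k, a k * b k

/-- Squared Euclidean norm on `ℝ³`. -/
def sq3 (a : Fin 3 → ℝ) : ℝ := dot3 a a

/-- Euclidean norm on `ℝ³`. -/
def norm3 (a : Fin 3 → ℝ) : ℝ := Real.sqrt (sq3 a)

/-- Velocity `v = m / ρ`. -/
def vel (U : MHDState) : Fin 3 → ℝ := fun k => mom U k / dens U

/-- Internal energy `𝓔(U) = E − (|m|²/ρ + |B|²)/2`. -/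
def intE (U : MHDState) : ℝ := toten U - (sq3 (mom U) / dens U + sq3 (magB U)) / 2

/-- Specific internal energy `e = 𝓔(U)/ρ`. -/
def specE (U : MHDState) : ℝ := intE U / dens U

/-- The admissible state set `𝒢`. -/
def Gset : Set MHDState := {U | 0 < dens U ∧ 0 < intE U}

/-- The set `𝒢_ρ` of states with positive density. -/
def Grho : Set MHDState := {U | 0 < dens U}

/-- Euclidean dot product on `ℝ⁸`. -/
def dot8 (U V : MHDState) : ℝ := ∑ i, U i * V i

/-- The vector `n* = (|v*|²/2, −v*, −B*, 1)`. -/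
def nstar (vs Bs : Fin 3 → ℝ) : MHDState :=
  mk (sq3 vs / 2) (fun k => -vs k) (fun k => -Bs k) 1

/-- The set `𝒢*`. -/
def GstarSet : Set MHDState :=
  {U | 0 < dens U ∧ ∀ vs Bs : Fin 3 → ℝ, 0 < dot8 U (nstar vs Bs) + sq3 Bs / 2}

/-- Equation of state assumption: for `ρ > 0`, `e > 0 ↔ p(ρ,e) > 0`. -/
def IsEOS (pfun : ℝ → ℝ → ℝ) : Prop :=
  ∀ ρ e : ℝ, 0 < ρ → (0 < e ↔ 0 < pfun ρ e)

/-- Pressure of a state, via the equation of state. -/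
def pres (pfun : ℝ → ℝ → ℝ) (U : MHDState) : ℝ := pfun (dens U) (specE U)

/-- Total pressure `p + |B|²/2`. -/
def ptot (pfun : ℝ → ℝ → ℝ) (U : MHDState) : ℝ := pres pfun U + sq3 (magB U) / 2

/-- The `i`-th flux `F_i(U)`. -/
def flux (pfun : ℝ → ℝ → ℝ) (i : Fin 3) (U : MHDState) : MHDState :=
  mk (dens U * vel U i)
    (fun k => dens U * vel U i * vel U k - magB U i * magB U k
      + ptot pfun U * (if k = i then 1 else 0))
    (fun k => vel U i * magB U k - magB U i * vel U k)
    (vel U i * (toten U + ptot pfun U) - magB U i * dot3 (vel U) (magB U))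

/-- Directional inner product `⟨ξ, w⟩ = Σ_{k<d} ξ_k w_k` for `ξ ∈ ℝ^d`, `w ∈ ℝ³`, `d ≤ 3`. -/
def dirDot {d : ℕ} (hd : d ≤ 3) (ξ : Fin d → ℝ) (w : Fin 3 → ℝ) : ℝ :=
  ∑ k, ξ k * w (Fin.castLE hd k)

/-- Directional flux `⟨ξ, F(U)⟩ = Σ_{i<d} ξ_i F_i(U)`. -/
def dirFlux (pfun : ℝ → ℝ → ℝ) {d : ℕ} (hd : d ≤ 3) (ξ : Fin d → ℝ) (U : MHDState) :
    MHDState :=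
  ∑ i, ξ i • flux pfun (Fin.castLE hd i) U

/-- `ξ` is a unit vector. -/
def unitVec {d : ℕ} (ξ : Fin d → ℝ) : Prop := (∑ k, (ξ k) ^ 2) = 1

/-- `𝒞_s(U) = p / (ρ √(2e))`. -/
def soundC (pfun : ℝ → ℝ → ℝ) (U : MHDState) : ℝ :=
  pres pfun U / (dens U * Real.sqrt (2 * specE U))

/-- `𝒞(U; ξ)`. -/
def waveC (pfun : ℝ → ℝ → ℝ) {d : ℕ} (hd : d ≤ 3) (ξ : Fin d → ℝ) (U : MHDState) : ℝ :=
  Real.sqrt ((soundC pfun U ^ 2 + sq3 (magB U) / dens U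
    + Real.sqrt ((soundC pfun U ^ 2 + sq3 (magB U) / dens U) ^ 2
      - 4 * soundC pfun U ^ 2 * dirDot hd ξ (magB U) ^ 2 / dens U)) / 2)

/-- Roe-type averaged velocity `v̄ = (√ρ v + √ρ̃ ṽ)/(√ρ + √ρ̃)`. -/
def roeV (U Ut : MHDState) : Fin 3 → ℝ := fun k =>
  (Real.sqrt (dens U) * vel U k + Real.sqrt (dens Ut) * vel Ut k)
    / (Real.sqrt (dens U) + Real.sqrt (dens Ut))

/-- `α_r(U, Ũ; ξ)`. -/
def alphaR (pfun : ℝ → ℝ → ℝ) {d : ℕ} (hd : d ≤ 3) (ξ : Fin d → ℝ) (U Ut : MHDState) : ℝ :=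
  max (dirDot hd ξ (vel U)) (dirDot hd ξ (roeV U Ut)) + waveC pfun hd ξ U
    + norm3 (magB U - magB Ut) / (Real.sqrt (dens U) + Real.sqrt (dens Ut))

/-- `α_l(U, Ũ; ξ)`. -/
def alphaL (pfun : ℝ → ℝ → ℝ) {d : ℕ} (hd : d ≤ 3) (ξ : Fin d → ℝ) (U Ut : MHDState) : ℝ :=
  min (dirDot hd ξ (vel U)) (dirDot hd ξ (roeV U Ut)) - waveC pfun hd ξ U
    - norm3 (magB U - magB Ut) / (Real.sqrt (dens U) + Real.sqrt (dens Ut))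

/-- `α_⋆(U, Ũ; ξ)`. -/
def alphaS (pfun : ℝ → ℝ → ℝ) {d : ℕ} (hd : d ≤ 3) (ξ : Fin d → ℝ) (U Ut : MHDState) : ℝ :=
  max (|dirDot hd ξ (vel U)|) (|dirDot hd ξ (roeV U Ut)|) + waveC pfun hd ξ U
    + norm3 (magB U - magB Ut) / (Real.sqrt (dens U) + Real.sqrt (dens Ut))

/-- The vector `θ(U, v*, B*) = 2^{−1/2}(B − B*, √ρ(v − v*), √(2ρe)) ∈ ℝ⁷`. -/
def theta (U : MHDState) (vs Bs : Fin 3 → ℝ) : Fin 7 → ℝ :=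
  ![(magB U 0 - Bs 0) / Real.sqrt 2,
    (magB U 1 - Bs 1) / Real.sqrt 2,
    (magB U 2 - Bs 2) / Real.sqrt 2,
    Real.sqrt (dens U) * (vel U 0 - vs 0) / Real.sqrt 2,
    Real.sqrt (dens U) * (vel U 1 - vs 1) / Real.sqrt 2,
    Real.sqrt (dens U) * (vel U 2 - vs 2) / Real.sqrt 2,
    Real.sqrt (2 * intE U) / Real.sqrt 2]

/-- `|θ|²`. -/
def thetaSq (U : MHDState) (vs Bs : Fin 3 → ℝ) : ℝ := ∑ k, theta U vs Bs k ^ 2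

/-- Godunov–Powell source vector `S(U) = (0, B, v, v·B)`. -/
def source (U : MHDState) : MHDState := mk 0 (magB U) (vel U) (dot3 (vel U) (magB U))

/-- HLL numerical flux with clamped wave speeds `σm ≤ 0 ≤ σp`. -/
def hllFlux (pfun : ℝ → ℝ → ℝ) {d : ℕ} (hd : d ≤ 3) (ξ : Fin d → ℝ)
    (Um Up : MHDState) (σm σp : ℝ) : MHDState :=
  (σp - σm)⁻¹ • (σp • dirFlux pfun hd ξ Um - σm • dirFlux pfun hd ξ Up
    + (σm * σp) • (Up - Um))

/-- HLL intermediate state `H(U⁻, U⁺; ξ)`. -/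
def hllMid (pfun : ℝ → ℝ → ℝ) {d : ℕ} (hd : d ≤ 3) (ξ : Fin d → ℝ)
    (Um Up : MHDState) (σm σp : ℝ) : MHDState :=
  (σp - σm)⁻¹ • (σp • Up - dirFlux pfun hd ξ Up - σm • Um + dirFlux pfun hd ξ Um)

/-- The quantity `α̂_j` of Theorem 2.3. -/
def alphaHat (pfun : ℝ → ℝ → ℝ) {d : ℕ} (hd : d ≤ 3) {N : ℕ}
    (s : Fin N → ℝ) (ξ : Fin N → Fin d → ℝ) (U : Fin N → MHDState) (j : Fin N) : ℝ :=
  max (dirDot hd (ξ j) (vel (U j)))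
      ((∑ i, s i)⁻¹ * ∑ i, s i * dirDot hd (fun k => ξ j k - ξ i k) (roeV (U j) (U i)))
  + waveC pfun hd (ξ j) (U j)
  + 2 * (∑ i, s i)⁻¹ * ∑ i, s i *
      (norm3 (magB (U j) - magB (U i)) / (Real.sqrt (dens (U j)) + Real.sqrt (dens (U i))))

def d1le3 : (1 : ℕ) ≤ 3 := by omega
def d2le3 : (2 : ℕ) ≤ 3 := by omega

/-- In one dimension the direction `ξ = 1`. -/
def xi1 : Fin 1 → ℝ := fun _ => 1


set_option maxHeartbeats 4000000
section Helpers

/-! ### Auxiliary lemmas -/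

lemma mk_apply_0 (ρ : ℝ) (m B : Fin 3 → ℝ) (E : ℝ) : (mk ρ m B E) 0 = ρ := rfl
lemma mk_apply_1 (ρ : ℝ) (m B : Fin 3 → ℝ) (E : ℝ) : (mk ρ m B E) 1 = m 0 := rfl
lemma mk_apply_2 (ρ : ℝ) (m B : Fin 3 → ℝ) (E : ℝ) : (mk ρ m B E) 2 = m 1 := rfl
lemma mk_apply_3 (ρ : ℝ) (m B : Fin 3 → ℝ) (E : ℝ) : (mk ρ m B E) 3 = m 2 := rfl
lemma mk_apply_4 (ρ : ℝ) (m B : Fin 3 → ℝ) (E : ℝ) : (mk ρ m B E) 4 = B 0 := rfl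
lemma mk_apply_5 (ρ : ℝ) (m B : Fin 3 → ℝ) (E : ℝ) : (mk ρ m B E) 5 = B 1 := rfl
lemma mk_apply_6 (ρ : ℝ) (m B : Fin 3 → ℝ) (E : ℝ) : (mk ρ m B E) 6 = B 2 := rfl
lemma mk_apply_7 (ρ : ℝ) (m B : Fin 3 → ℝ) (E : ℝ) : (mk ρ m B E) 7 = E := rfl
lemma magB_apply_0 (U : MHDState) : magB U 0 = U 4 := rfl
lemma magB_apply_1 (U : MHDState) : magB U 1 = U 5 := rfl
lemma magB_apply_2 (U : MHDState) : magB U 2 = U 6 := rfl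
lemma mom_apply_0 (U : MHDState) : mom U 0 = U 1 := rfl
lemma mom_apply_1 (U : MHDState) : mom U 1 = U 2 := rfl
lemma mom_apply_2 (U : MHDState) : mom U 2 = U 3 := rfl

lemma sq3_nonneg (a : Fin 3 → ℝ) : 0 ≤ sq3 a := by
  simp only [sq3, dot3, Fin.sum_univ_three, ← sq]; positivity

lemma cs3 (a b : Fin 3 → ℝ) : dot3 a b ^ 2 ≤ sq3 a * sq3 b := by
  simp only [sq3, dot3, Fin.sum_univ_three]
  nlinarith [sq_nonneg (a 0 * b 1 - a 1 * b 0), sq_nonneg (a 0 * b 2 - a 2 * b 0),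
    sq_nonneg (a 1 * b 2 - a 2 * b 1)]

lemma norm3_nonneg (a : Fin 3 → ℝ) : 0 ≤ norm3 a := Real.sqrt_nonneg _

lemma norm3_sq (a : Fin 3 → ℝ) : norm3 a ^ 2 = sq3 a := Real.sq_sqrt (sq3_nonneg a)

lemma dot3_le (a b : Fin 3 → ℝ) : dot3 a b ≤ norm3 a * norm3 b := by
  have h := cs3 a b
  have h2 : norm3 a * norm3 b = Real.sqrt (sq3 a * sq3 b) := (Real.sqrt_mul (sq3_nonneg a) _).symm
  rw [h2]
  calc dot3 a b ≤ |dot3 a b| := le_abs_self _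
    _ = Real.sqrt ((dot3 a b) ^ 2) := (Real.sqrt_sq_eq_abs _).symm
    _ ≤ _ := Real.sqrt_le_sqrt h

lemma abs_dot3_le (a b : Fin 3 → ℝ) : |dot3 a b| ≤ norm3 a * norm3 b := by
  rcases abs_cases (dot3 a b) with ⟨h, _⟩ | ⟨h, _⟩
  · rw [h]; exact dot3_le a b
  · rw [h]
    have h3 : dot3 (fun k => -a k) b = - dot3 a b := by
      simp only [dot3, Fin.sum_univ_three]; ring
    have h4 : norm3 (fun k => -a k) = norm3 a := by
      have : sq3 (fun k => -a k) = sq3 a := by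
        simp only [sq3, dot3, Fin.sum_univ_three]; ring
      simp only [norm3, this]
    have := dot3_le (fun k => -a k) b
    rw [h3, h4] at this; linarith

lemma norm3_triangle (x y : Fin 3 → ℝ) : norm3 (fun k => x k + y k) ≤ norm3 x + norm3 y := by
  have e1 : sq3 (fun k => x k + y k) = sq3 x + 2 * dot3 x y + sq3 y := by
    simp only [sq3, dot3, Fin.sum_univ_three]; ring
  have h : sq3 (fun k => x k + y k) ≤ (norm3 x + norm3 y) ^ 2 := by
    nlinarith [dot3_le x y, norm3_sq x, norm3_sq y]
  calc norm3 (fun k => x k + y k) = Real.sqrt (sq3 (fun k => x k + y k)) := rfl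
    _ ≤ Real.sqrt ((norm3 x + norm3 y) ^ 2) := Real.sqrt_le_sqrt h
    _ = norm3 x + norm3 y := Real.sqrt_sq (add_nonneg (norm3_nonneg x) (norm3_nonneg y))

lemma norm3_smul (t : ℝ) (ht : 0 ≤ t) (x : Fin 3 → ℝ) :
    norm3 (fun k => t * x k) = t * norm3 x := by
  have e1 : sq3 (fun k => t * x k) = t ^ 2 * sq3 x := by
    simp only [sq3, dot3, Fin.sum_univ_three]; ring
  rw [norm3, e1, Real.sqrt_mul (sq_nonneg t), Real.sqrt_sq ht]; rfl

lemma amgm_sqrt (u v : ℝ) (hu : 0 ≤ u) (hv : 0 ≤ v) :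
    Real.sqrt u * Real.sqrt v ≤ (u + v) / 2 := by
  nlinarith [sq_nonneg (Real.sqrt u - Real.sqrt v), Real.sq_sqrt hu, Real.sq_sqrt hv]

lemma two_cs (X1 X2 Y1 Y2 : ℝ) (hX1 : 0 ≤ X1) (hX2 : 0 ≤ X2) (hY1 : 0 ≤ Y1) (hY2 : 0 ≤ Y2) :
    X1 * Y1 + X2 * Y2 ≤ Real.sqrt (X1 ^ 2 + X2 ^ 2) * Real.sqrt (Y1 ^ 2 + Y2 ^ 2) := by
  have h1 : (X1 * Y1 + X2 * Y2) ^ 2 ≤ (X1 ^ 2 + X2 ^ 2) * (Y1 ^ 2 + Y2 ^ 2) := by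
    nlinarith [sq_nonneg (X1 * Y2 - X2 * Y1)]
  have h2 : 0 ≤ X1 * Y1 + X2 * Y2 := by positivity
  calc X1 * Y1 + X2 * Y2 = Real.sqrt ((X1 * Y1 + X2 * Y2) ^ 2) := (Real.sqrt_sq h2).symm
    _ ≤ Real.sqrt ((X1 ^ 2 + X2 ^ 2) * (Y1 ^ 2 + Y2 ^ 2)) := Real.sqrt_le_sqrt h1
    _ = _ := Real.sqrt_mul (by positivity) _

lemma twobytwo (lam A dd γ2 S r2 τ β : ℝ) (hγ2 : 0 ≤ γ2) (hr2 : 0 ≤ r2)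
    (ha : A + γ2 ≤ lam) (hdle : dd ≤ lam) (hdd : dd = β ^ 2)
    (hprod : (lam - (A + γ2)) * (lam - dd) = β ^ 2 * γ2)
    (hτ : τ ^ 2 ≤ γ2 * r2) :
    A * S ^ 2 + γ2 * S ^ 2 - 2 * S * β * τ + dd * r2 ≤ lam * (S ^ 2 + r2) := by
  set X := (lam - (A + γ2)) * S ^ 2 with hXdef
  set Y := (lam - dd) * r2 with hYdef
  have hX : 0 ≤ X := by nlinarith [sq_nonneg S]
  have hY : 0 ≤ Y := by nlinarith
  have hXY : (S * β * τ) ^ 2 ≤ X * Y := by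
    have h := mul_le_mul_of_nonneg_left hτ (mul_nonneg (sq_nonneg S) (sq_nonneg β))
    have h2 : X * Y = β ^ 2 * γ2 * (S ^ 2 * r2) := by
      rw [hXdef, hYdef]; linear_combination (S ^ 2 * r2) * hprod
    nlinarith [h, h2]
  have h4 : (2 * (S * β * τ)) ^ 2 ≤ (X + Y) ^ 2 := by nlinarith [sq_nonneg (X - Y)]
  have h5 : |2 * (S * β * τ)| ≤ X + Y := by
    have := Real.sqrt_le_sqrt h4
    rwa [Real.sqrt_sq_eq_abs, Real.sqrt_sq (by linarith)] at this
  have h6 := neg_abs_le (2 * (S * β * τ))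
  nlinarith [h5, h6]

/-- Zero-padded direction vector in `ℝ³`. -/
def pad {d : ℕ} (hd : d ≤ 3) (ξ : Fin d → ℝ) : Fin 3 → ℝ :=
  fun k => if h : (k : ℕ) < d then ξ ⟨k, h⟩ else 0

lemma dirDot_pad {d : ℕ} (hd : d ≤ 3) (ξ : Fin d → ℝ) (w : Fin 3 → ℝ) :
    dirDot hd ξ w = dot3 (pad hd ξ) w := by
  interval_cases d <;>
    simp [dirDot, dot3, pad, Fin.sum_univ_three, Fin.sum_univ_succ]

lemma pad_unit {d : ℕ} (hd : d ≤ 3) (ξ : Fin d → ℝ) (hξ : unitVec ξ) :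
    sq3 (pad hd ξ) = 1 := by
  rw [← hξ]
  interval_cases d <;>
    simp [sq3, dot3, pad, Fin.sum_univ_three, Fin.sum_univ_succ, sq]

lemma dirFlux_pad (pfun : ℝ → ℝ → ℝ) {d : ℕ} (hd : d ≤ 3) (ξ : Fin d → ℝ) (U : MHDState) :
    dirFlux pfun hd ξ U = ∑ i : Fin 3, pad hd ξ i • flux pfun i U := by
  interval_cases d <;>
    simp [dirFlux, pad, Fin.sum_univ_three, Fin.sum_univ_succ]

lemma roeV_comm (U V : MHDState) : roeV U V = roeV V U := by
  funext k; simp only [roeV]; ring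

lemma norm3_sub_comm (a b : Fin 3 → ℝ) : norm3 (a - b) = norm3 (b - a) := by
  have : sq3 (a - b) = sq3 (b - a) := by
    simp only [sq3, dot3, Fin.sum_univ_three, Pi.sub_apply]; ring
  simp only [norm3, this]

lemma U_dot_nstar (U : MHDState) (hρ : dens U ≠ 0) (vs Bs : Fin 3 → ℝ) :
    dot8 U (nstar vs Bs) + sq3 Bs / 2
      = dens U * sq3 (fun k => vel U k - vs k) / 2
        + sq3 (fun k => magB U k - Bs k) / 2 + dens U * specE U := by
  have h0 : U 0 ≠ 0 := hρ
  simp only [dot8, Fin.sum_univ_eight, nstar, mk_apply_0, mk_apply_1, mk_apply_2, mk_apply_3,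
    mk_apply_4, mk_apply_5, mk_apply_6, mk_apply_7, specE, intE, vel, toten,
    mom_apply_0, mom_apply_1, mom_apply_2, magB_apply_0, magB_apply_1, magB_apply_2, dens,
    sq3, dot3, Fin.sum_univ_three]
  field_simp
  ring

lemma flux_dot_nstar (pfun : ℝ → ℝ → ℝ) (U : MHDState) (hρ : dens U ≠ 0)
    (vs Bs xh : Fin 3 → ℝ) :
    dot8 (∑ i : Fin 3, xh i • flux pfun i U) (nstar vs Bs)
      = dot3 xh (vel U) * (dens U * sq3 (fun k => vel U k - vs k) / 2
          + sq3 (fun k => magB U k - Bs k) / 2 + dens U * specE U)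
        + (pres pfun U * dot3 xh (fun k => vel U k - vs k)
           + dot3 (fun k => magB U k - Bs k) (magB U) * dot3 xh (fun k => vel U k - vs k)
           - dot3 xh (magB U) * dot3 (fun k => vel U k - vs k) (fun k => magB U k - Bs k))
        - sq3 (fun k => magB U k - Bs k) / 2 * dot3 xh (fun k => vel U k - vs k)
        + dot3 vs Bs * dot3 xh (magB U)
        - sq3 Bs / 2 * dot3 xh vs := by
  have hIE : intE U = dens U * specE U := by
    rw [specE]; field_simp
  have hE : toten U = dens U * specE U + (sq3 (mom U) / dens U + sq3 (magB U)) / 2 := by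
    rw [← hIE, intE]; ring
  simp only [dot8, Fin.sum_univ_eight, Finset.sum_apply, Pi.smul_apply, smul_eq_mul,
    nstar, flux, ptot, mk_apply_0, mk_apply_1, mk_apply_2, mk_apply_3,
    mk_apply_4, mk_apply_5, mk_apply_6, mk_apply_7, hE, vel,
    mom_apply_0, mom_apply_1, mom_apply_2, magB_apply_0, magB_apply_1, magB_apply_2,
    sq3, dot3, Fin.sum_univ_three, Fin.isValue, Fin.reduceEq, reduceIte]
  field_simp
  ring

lemma dot8_expand (c : ℝ) (X Y Z W V : MHDState) (a b : ℝ) :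
    dot8 (c • (a • X - Y - b • Z + W)) V
      = c * (a * dot8 X V - dot8 Y V - b * dot8 Z V + dot8 W V) := by
  simp only [dot8, Pi.smul_apply, Pi.sub_apply, Pi.add_apply, smul_eq_mul, Finset.mul_sum,
    ← Finset.sum_sub_distrib, ← Finset.sum_add_distrib]
  exact Finset.sum_congr rfl (fun i _ => by ring)

lemma dirFlux_zero (pfun : ℝ → ℝ → ℝ) {d : ℕ} (hd : d ≤ 3) (ξ : Fin d → ℝ) (U : MHDState) :
    dirFlux pfun hd ξ U 0 = dens U * dirDot hd ξ (vel U) := by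
  simp only [dirFlux, Finset.sum_apply, Pi.smul_apply, smul_eq_mul, flux, mk_apply_0,
    dirDot, Finset.mul_sum]
  exact Finset.sum_congr rfl (fun i _ => by ring)

lemma max_eq_add (a b : ℝ) : max a b = a + max 0 (b - a) := by
  rcases le_total a b with h | h
  · rw [max_eq_right h, max_eq_right (by linarith)]; ring
  · rw [max_eq_left h, max_eq_left (by linarith)]; ring

lemma min_eq_sub (a b : ℝ) : min a b = a - max 0 (a - b) := by
  rcases le_total a b with h | h
  · rw [min_eq_left h, max_eq_left (by linarith)]; ring
  · rw [min_eq_right h, max_eq_right (by linarith)]; ring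

lemma wave_facts (pfun : ℝ → ℝ → ℝ) (hEOS : IsEOS pfun) {d : ℕ} (hd : d ≤ 3)
    (ξ : Fin d → ℝ) (hξ : unitVec ξ) (U : MHDState) (hρ : 0 < dens U) (hI : 0 < intE U) :
    0 < pres pfun U ∧ 0 ≤ sq3 (magB U) - dirDot hd ξ (magB U) ^ 2 ∧
    0 < waveC pfun hd ξ U ∧
    pres pfun U ^ 2 / (2 * dens U * specE U) + (sq3 (magB U) - dirDot hd ξ (magB U) ^ 2)
        ≤ dens U * waveC pfun hd ξ U ^ 2 ∧
    dirDot hd ξ (magB U) ^ 2 ≤ dens U * waveC pfun hd ξ U ^ 2 ∧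
    (dens U * waveC pfun hd ξ U ^ 2
        - (pres pfun U ^ 2 / (2 * dens U * specE U)
            + (sq3 (magB U) - dirDot hd ξ (magB U) ^ 2)))
      * (dens U * waveC pfun hd ξ U ^ 2 - dirDot hd ξ (magB U) ^ 2)
      = dirDot hd ξ (magB U) ^ 2 * (sq3 (magB U) - dirDot hd ξ (magB U) ^ 2) := by
  have he : 0 < specE U := div_pos hI hρ
  have hp : 0 < pres pfun U := (hEOS _ _ hρ).1 he
  have hβ2 : dirDot hd ξ (magB U) ^ 2 ≤ sq3 (magB U) := by
    rw [dirDot_pad]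
    have := cs3 (pad hd ξ) (magB U)
    rwa [pad_unit hd ξ hξ, one_mul] at this
  have hγ2 : 0 ≤ sq3 (magB U) - dirDot hd ξ (magB U) ^ 2 := by linarith
  have hA : 0 < pres pfun U ^ 2 / (2 * dens U * specE U) := by positivity
  have hCs2 : soundC pfun U ^ 2 = pres pfun U ^ 2 / (dens U ^ 2 * (2 * specE U)) := by
    rw [soundC, div_pow, mul_pow, Real.sq_sqrt (by positivity)]
  -- abbreviations (purely notational)
  set p := pres pfun U with hpdef
  set ρ := dens U with hρdef
  set e := specE U with hedef
  set β := dirDot hd ξ (magB U) with hβdef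
  set A := p ^ 2 / (2 * ρ * e) with hAdef
  set T := soundC pfun U ^ 2 + sq3 (magB U) / ρ with hTdef
  set inner := T ^ 2 - 4 * soundC pfun U ^ 2 * β ^ 2 / ρ with hinnerdef
  have hρT : ρ * T = A + sq3 (magB U) := by
    rw [hTdef, hCs2, hAdef]; field_simp
  have hinner_scale : ρ ^ 2 * inner = (A + sq3 (magB U)) ^ 2 - 4 * A * β ^ 2 := by
    rw [hinnerdef, hTdef, hCs2, hAdef]; field_simp
  have hscale_nonneg : 0 ≤ (A + sq3 (magB U)) ^ 2 - 4 * A * β ^ 2 := by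
    nlinarith [hβ2, hA, sq_nonneg (A - sq3 (magB U))]
  have hinner0 : 0 ≤ inner := by nlinarith [hinner_scale, hscale_nonneg, pow_pos hρ 2]
  have hs2 : Real.sqrt inner ^ 2 = inner := Real.sq_sqrt hinner0
  have hT0 : 0 ≤ T := by
    rw [hTdef]
    have : 0 ≤ sq3 (magB U) / ρ := div_nonneg (sq3_nonneg _) hρ.le
    positivity
  have hw2 : waveC pfun hd ξ U ^ 2 = (T + Real.sqrt inner) / 2 := by
    rw [waveC, ← hβdef, ← hρdef, ← hTdef, ← hinnerdef]
    exact Real.sq_sqrt (by positivity)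
  -- the scaled eigenvalue
  have hlam : ρ * waveC pfun hd ξ U ^ 2
      = ((A + (sq3 (magB U) - β ^ 2)) + β ^ 2 + ρ * Real.sqrt inner) / 2 := by
    rw [hw2]; field_simp; linear_combination hρT
  have hρs : (ρ * Real.sqrt inner) ^ 2 = (A + sq3 (magB U)) ^ 2 - 4 * A * β ^ 2 := by
    rw [mul_pow, hs2]; linear_combination hinner_scale
  have hρs0 : 0 ≤ ρ * Real.sqrt inner := mul_nonneg hρ.le (Real.sqrt_nonneg _)
  have habs : |A + (sq3 (magB U) - β ^ 2) - β ^ 2| ≤ ρ * Real.sqrt inner := by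
    have h1 : (A + (sq3 (magB U) - β ^ 2) - β ^ 2) ^ 2 ≤ (ρ * Real.sqrt inner) ^ 2 := by
      rw [hρs]; nlinarith [hβ2, hA]
    have := Real.sqrt_le_sqrt h1
    rwa [Real.sqrt_sq_eq_abs, Real.sqrt_sq hρs0] at this
  have habs1 := abs_le.mp habs
  constructor
  · exact hp
  constructor
  · exact hγ2
  constructor
  · -- waveC positive
    have h1 : A + (sq3 (magB U) - β ^ 2) ≤ ρ * waveC pfun hd ξ U ^ 2 := by
      rw [hlam]; linarith [habs1.1]
    have h2 : 0 < ρ * waveC pfun hd ξ U ^ 2 := by nlinarith [hγ2, hA]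
    have h3 : 0 < waveC pfun hd ξ U ^ 2 := by
      by_contra h
      push_neg at h
      nlinarith [hρ]
    have h4 : 0 ≤ waveC pfun hd ξ U := Real.sqrt_nonneg _
    rcases h4.lt_or_eq with h5 | h5
    · exact h5
    · exfalso; rw [← h5] at h3; simp at h3
  refine ⟨?_, ?_, ?_⟩
  · rw [hlam]; linarith [habs1.1]
  · rw [hlam]; linarith [habs1.2]
  · rw [hlam]; linear_combination (1/4 : ℝ) * hρs


lemma dot3_comm (a b : Fin 3 → ℝ) : dot3 a b = dot3 b a := by
  simp only [dot3]; exact Finset.sum_congr rfl (fun _ _ => mul_comm _ _)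

lemma dot3_sub_right (a b c : Fin 3 → ℝ) :
    dot3 a (fun k => b k - c k) = dot3 a b - dot3 a c := by
  simp only [dot3, Fin.sum_univ_three]; ring

lemma dot3_expand (a b c : Fin 3 → ℝ) (t s : ℝ) :
    dot3 (fun k => a k - t * c k) (fun k => b k - s * c k)
      = dot3 a b - s * dot3 a c - t * dot3 c b + t * s * sq3 c := by
  simp only [sq3, dot3, Fin.sum_univ_three]; ring

lemma Q_bound (pfun : ℝ → ℝ → ℝ) (hEOS : IsEOS pfun) {d : ℕ} (hd : d ≤ 3)
    (ξ : Fin d → ℝ) (hξ : unitVec ξ) (U : MHDState) (hρ : 0 < dens U) (hI : 0 < intE U)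
    (vs Bs : Fin 3 → ℝ) :
    |pres pfun U * dot3 (pad hd ξ) (fun k => vel U k - vs k)
      + dot3 (fun k => magB U k - Bs k) (magB U) * dot3 (pad hd ξ) (fun k => vel U k - vs k)
      - dot3 (pad hd ξ) (magB U) * dot3 (fun k => vel U k - vs k) (fun k => magB U k - Bs k)|
    ≤ waveC pfun hd ξ U * (dens U * sq3 (fun k => vel U k - vs k) / 2
        + sq3 (fun k => magB U k - Bs k) / 2 + dens U * specE U) := by
  obtain ⟨hp, hγ2, hC, hAγlam, hβlam, hprod⟩ := wave_facts pfun hEOS hd ξ hξ U hρ hI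
  rw [dirDot_pad hd ξ (magB U)] at hγ2 hAγlam hβlam hprod
  have he : 0 < specE U := div_pos hI hρ
  have hunit : sq3 (pad hd ξ) = 1 := pad_unit hd ξ hξ
  set xh := pad hd ξ with hxh
  set w : Fin 3 → ℝ := fun k => vel U k - vs k with hwdef
  set b : Fin 3 → ℝ := fun k => magB U k - Bs k with hbdef
  set S := dot3 xh w with hSdef
  set β := dot3 xh (magB U) with hβdef
  set A := pres pfun U ^ 2 / (2 * dens U * specE U) with hAdef
  set lam := dens U * waveC pfun hd ξ U ^ 2 with hlamdef
  set γ2 := sq3 (magB U) - β ^ 2 with hγ2def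
  have hApos : 0 < A := by rw [hAdef]; positivity
  set z : Fin 3 → ℝ := fun k => S * magB U k - β * w k with hzdef
  -- identity Q = b ⬝ z + p S
  have hQz : pres pfun U * S + dot3 b (magB U) * S - β * dot3 w b
      = dot3 b z + pres pfun U * S := by
    simp only [hzdef, hbdef, dot3, Fin.sum_univ_three]; ring
  -- Cauchy-Schwarz facts
  have hr2 : S ^ 2 ≤ sq3 w := by
    have h := cs3 xh w; rw [hunit, one_mul] at h; exact h
  have e1 : dot3 (fun k => w k - S * xh k) (fun k => magB U k - β * xh k)
      = dot3 w (magB U) - S * β := by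
    rw [dot3_expand, hunit, dot3_comm w xh, ← hSdef, ← hβdef]; ring
  have e2 : sq3 (fun k => w k - S * xh k) = sq3 w - S ^ 2 := by
    have h := dot3_expand w w xh S S
    rw [hunit, dot3_comm w xh, ← hSdef] at h
    rw [sq3, h, ← sq3]; ring
  have e3 : sq3 (fun k => magB U k - β * xh k) = γ2 := by
    have h := dot3_expand (magB U) (magB U) xh β β
    rw [hunit, dot3_comm (magB U) xh, ← hβdef] at h
    rw [sq3, h, ← sq3, hγ2def]; ring
  have hτsq : (dot3 w (magB U) - S * β) ^ 2 ≤ γ2 * (sq3 w - S ^ 2) := by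
    have h := cs3 (fun k => w k - S * xh k) (fun k => magB U k - β * xh k)
    rw [e1, e2, e3] at h; linarith [h]
  have hzexp : sq3 z = S ^ 2 * sq3 (magB U) - 2 * S * β * dot3 w (magB U) + β ^ 2 * sq3 w := by
    simp only [hzdef, sq3, dot3, Fin.sum_univ_three]; ring
  -- the key quadratic-form bound
  have hstar : sq3 z + A * S ^ 2 ≤ lam * sq3 w := by
    have h := twobytwo lam A (β ^ 2) γ2 S (sq3 w - S ^ 2) (dot3 w (magB U) - S * β) β
      (by linarith [hγ2]) (by linarith [hr2]) hAγlam hβlam rfl hprod hτsq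
    nlinarith [h, hzexp]
  -- norms
  have hnb := norm3_nonneg b
  have hnz := norm3_nonneg z
  have h2ρe : (0:ℝ) < 2 * dens U * specE U := by positivity
  have hY2 : (Real.sqrt A * |S|) ^ 2 = A * S ^ 2 := by
    rw [mul_pow, Real.sq_sqrt hApos.le, sq_abs]
  have hpS : Real.sqrt (2 * dens U * specE U) * (Real.sqrt A * |S|) = pres pfun U * |S| := by
    rw [← mul_assoc, ← Real.sqrt_mul h2ρe.le]
    have h : 2 * dens U * specE U * A = pres pfun U ^ 2 := by rw [hAdef]; field_simp
    rw [h, Real.sqrt_sq hp.le]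
  have habs : |dot3 b z + pres pfun U * S| ≤ norm3 b * norm3 z
      + Real.sqrt (2 * dens U * specE U) * (Real.sqrt A * |S|) := by
    rw [hpS]
    calc |dot3 b z + pres pfun U * S| ≤ |dot3 b z| + |pres pfun U * S| := abs_add_le _ _
      _ ≤ norm3 b * norm3 z + pres pfun U * |S| := by
          have h1 := abs_dot3_le b z
          rw [abs_mul, abs_of_pos hp]
          linarith
  have hcs2 := two_cs (norm3 b) (Real.sqrt (2 * dens U * specE U)) (norm3 z)
    (Real.sqrt A * |S|) hnb (Real.sqrt_nonneg _) hnz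
    (mul_nonneg (Real.sqrt_nonneg _) (abs_nonneg _))
  rw [norm3_sq, norm3_sq, Real.sq_sqrt h2ρe.le, hY2] at hcs2
  have hs1 : Real.sqrt (sq3 z + A * S ^ 2) ≤ Real.sqrt (lam * sq3 w) := Real.sqrt_le_sqrt hstar
  have hs2 : Real.sqrt (lam * sq3 w)
      = waveC pfun hd ξ U * Real.sqrt (dens U * sq3 w) := by
    rw [hlamdef, show dens U * waveC pfun hd ξ U ^ 2 * sq3 w
        = waveC pfun hd ξ U ^ 2 * (dens U * sq3 w) by ring,
      Real.sqrt_mul (sq_nonneg _), Real.sqrt_sq hC.le]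
  have hfin : Real.sqrt (sq3 b + 2 * dens U * specE U) * Real.sqrt (lam * sq3 w)
      ≤ waveC pfun hd ξ U
        * (dens U * sq3 w / 2 + sq3 b / 2 + dens U * specE U) := by
    rw [hs2, ← mul_assoc, mul_comm (Real.sqrt (sq3 b + 2 * dens U * specE U)) (waveC pfun hd ξ U),
      mul_assoc]
    have h := amgm_sqrt (sq3 b + 2 * dens U * specE U) (dens U * sq3 w)
      (by nlinarith [sq3_nonneg b, h2ρe]) (by nlinarith [sq3_nonneg w, hρ])
    have h2 : (sq3 b + 2 * dens U * specE U + dens U * sq3 w) / 2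
        = dens U * sq3 w / 2 + sq3 b / 2 + dens U * specE U := by ring
    have h3 := mul_le_mul_of_nonneg_left h hC.le
    rw [h2] at h3
    exact h3
  rw [hQz]
  calc |dot3 b z + pres pfun U * S|
      ≤ norm3 b * norm3 z + Real.sqrt (2 * dens U * specE U) * (Real.sqrt A * |S|) := habs
    _ ≤ Real.sqrt (sq3 b + 2 * dens U * specE U) * Real.sqrt (sq3 z + A * S ^ 2) := hcs2
    _ ≤ Real.sqrt (sq3 b + 2 * dens U * specE U) * Real.sqrt (lam * sq3 w) :=
        mul_le_mul_of_nonneg_left hs1 (Real.sqrt_nonneg _)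
    _ ≤ _ := hfin

end Helpers

/-- Theorem 2.10 (properties of the HLL flux). -/
theorem hll_flux_properties (pfun : ℝ → ℝ → ℝ) (hEOS : IsEOS pfun)
    {d : ℕ} (hd1 : 1 ≤ d) (hd : d ≤ 3) (ξ : Fin d → ℝ) (hξ : unitVec ξ)
    (Um Up : MHDState) (hUm : Um ∈ Gset) (hUp : Up ∈ Gset)
    (σl σr : ℝ)
    (hr : alphaR pfun hd ξ Up Um ≤ σr) (hl : σl ≤ alphaL pfun hd ξ Um Up) :
    0 < max σr 0 - min σl 0 ∧
      hllFlux pfun hd ξ Um Up (min σl 0) (max σr 0) =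
          min σl 0 • hllMid pfun hd ξ Um Up (min σl 0) (max σr 0)
            + dirFlux pfun hd ξ Um - min σl 0 • Um ∧
      hllFlux pfun hd ξ Um Up (min σl 0) (max σr 0) =
          max σr 0 • hllMid pfun hd ξ Um Up (min σl 0) (max σr 0)
            + dirFlux pfun hd ξ Up - max σr 0 • Up ∧
      hllMid pfun hd ξ Um Up (min σl 0) (max σr 0) ∈ Grho ∧
      (∀ vs Bs : Fin 3 → ℝ,
        0 ≤ dot8 (hllMid pfun hd ξ Um Up (min σl 0) (max σr 0)) (nstar vs Bs)
            + sq3 Bs / 2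
            + dot3 vs Bs * (max σr 0 - min σl 0)⁻¹ *
                (dirDot hd ξ (magB Up) - dirDot hd ξ (magB Um))) ∧
      (dirDot hd ξ (magB Up) = dirDot hd ξ (magB Um) →
        hllMid pfun hd ξ Um Up (min σl 0) (max σr 0) ∈ closure GstarSet) := by
  obtain ⟨hρm, hIm⟩ := hUm
  obtain ⟨hρp, hIp⟩ := hUp
  obtain ⟨hpp, hγ2p, hCp, hAγp, hβlp, hprodp⟩ := wave_facts pfun hEOS hd ξ hξ Up hρp hIp
  obtain ⟨hpm, hγ2m, hCm, hAγm, hβlm, hprodm⟩ := wave_facts pfun hEOS hd ξ hξ Um hρm hIm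
  have hem : 0 < specE Um := div_pos hIm hρm
  have hep : 0 < specE Up := div_pos hIp hρp
  simp only [alphaR] at hr
  simp only [alphaL] at hl
  rw [roeV_comm Um Up, norm3_sub_comm (magB Um) (magB Up),
    add_comm (Real.sqrt (dens Um)) (Real.sqrt (dens Up))] at hl
  set σp := max σr 0 with hσpdef
  set σm := min σl 0 with hσmdef
  set tvp := dirDot hd ξ (vel Up) with htvpdef
  set tvm := dirDot hd ξ (vel Um) with htvmdef
  set vb := dirDot hd ξ (roeV Up Um) with hvbdef
  set nB := norm3 (magB Up - magB Um) with hnBdef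
  set sp := Real.sqrt (dens Up) with hspdef
  set sm := Real.sqrt (dens Um) with hsmdef
  have hsp : 0 < sp := Real.sqrt_pos.mpr hρp
  have hsm : 0 < sm := Real.sqrt_pos.mpr hρm
  have hnB0 : 0 ≤ nB := norm3_nonneg _
  set μ := nB / (sp + sm) with hμdef
  have hμ0 : 0 ≤ μ := div_nonneg hnB0 (by linarith)
  have hσr : σr ≤ σp := le_max_left σr 0
  have hσl : σm ≤ σl := min_le_left σl 0
  have hbp : max 0 (vb - tvp) + waveC pfun hd ξ Up + μ ≤ σp - tvp := by
    rw [max_eq_add tvp vb] at hr; linarith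
  have hbm : max 0 (tvm - vb) + waveC pfun hd ξ Um + μ ≤ tvm - σm := by
    rw [min_eq_sub tvm vb] at hl; linarith
  have hmp0 : (0:ℝ) ≤ max 0 (vb - tvp) := le_max_left _ _
  have hmm0 : (0:ℝ) ≤ max 0 (tvm - vb) := le_max_left _ _
  have hbp' : 0 < σp - tvp := by linarith
  have hbm' : 0 < tvm - σm := by linarith
  have hΔ : 0 < σp - σm := by
    have h1 : vb ≤ max tvp vb := le_max_right _ _
    have h2 : min tvm vb ≤ vb := min_le_right _ _
    linarith only [h1, h2, hr, hl, hσr, hσl, hCp, hCm, hμ0]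
  have hΔ' : σp - σm ≠ 0 := ne_of_gt hΔ
  -- part (ii) : density of the intermediate state
  have hdens : 0 < hllMid pfun hd ξ Um Up σm σp 0 := by
    have h0 : hllMid pfun hd ξ Um Up σm σp 0
        = (σp - σm)⁻¹ * (Up 0 * (σp - tvp) + Um 0 * (tvm - σm)) := by
      simp only [hllMid, Pi.smul_apply, Pi.sub_apply, Pi.add_apply, smul_eq_mul,
        dirFlux_zero]
      rw [← htvpdef, ← htvmdef, show dens Up = Up 0 from rfl, show dens Um = Um 0 from rfl]
      ring
    have hρp0 : 0 < Up 0 := hρp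
    have hρm0 : 0 < Um 0 := hρm
    rw [h0]
    exact mul_pos (inv_pos.mpr hΔ)
      (by nlinarith only [mul_pos hρp0 hbp', mul_pos hρm0 hbm'])
  -- part (iii) : the quadratic-form inequality
  have hiii : ∀ vs Bs : Fin 3 → ℝ,
      0 ≤ dot8 (hllMid pfun hd ξ Um Up σm σp) (nstar vs Bs) + sq3 Bs / 2
        + dot3 vs Bs * (σp - σm)⁻¹
          * (dirDot hd ξ (magB Up) - dirDot hd ξ (magB Um)) := by
    intro vs Bs
    rw [dirDot_pad hd ξ (magB Up), dirDot_pad hd ξ (magB Um)]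
    have hGp := U_dot_nstar Up (ne_of_gt hρp) vs Bs
    have hGm := U_dot_nstar Um (ne_of_gt hρm) vs Bs
    have hFp := flux_dot_nstar pfun Up (ne_of_gt hρp) vs Bs (pad hd ξ)
    have hFm := flux_dot_nstar pfun Um (ne_of_gt hρm) vs Bs (pad hd ξ)
    have hQbp := Q_bound pfun hEOS hd ξ hξ Up hρp hIp vs Bs
    have hQbm := Q_bound pfun hEOS hd ξ hξ Um hρm hIm vs Bs
    rw [← dirDot_pad hd ξ (vel Up), ← htvpdef] at hFp
    rw [← dirDot_pad hd ξ (vel Um), ← htvmdef] at hFm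
    set Gp := dens Up * sq3 (fun k => vel Up k - vs k) / 2
      + sq3 (fun k => magB Up k - Bs k) / 2 + dens Up * specE Up with hGpdef
    set Gm := dens Um * sq3 (fun k => vel Um k - vs k) / 2
      + sq3 (fun k => magB Um k - Bs k) / 2 + dens Um * specE Um with hGmdef
    set Sp := dot3 (pad hd ξ) (fun k => vel Up k - vs k) with hSpdef
    set Sm := dot3 (pad hd ξ) (fun k => vel Um k - vs k) with hSmdef
    set Qp := pres pfun Up * Sp
      + dot3 (fun k => magB Up k - Bs k) (magB Up) * Sp
      - dot3 (pad hd ξ) (magB Up)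
          * dot3 (fun k => vel Up k - vs k) (fun k => magB Up k - Bs k) with hQpdef
    set Qm := pres pfun Um * Sm
      + dot3 (fun k => magB Um k - Bs k) (magB Um) * Sm
      - dot3 (pad hd ξ) (magB Um)
          * dot3 (fun k => vel Um k - vs k) (fun k => magB Um k - Bs k) with hQmdef
    have hGp' : dot8 Up (nstar vs Bs) = Gp - sq3 Bs / 2 := by linarith
    have hGm' : dot8 Um (nstar vs Bs) = Gm - sq3 Bs / 2 := by linarith
    have hmid : hllMid pfun hd ξ Um Up σm σp = (σp - σm)⁻¹
        • (σp • Up - dirFlux pfun hd ξ Up - σm • Um + dirFlux pfun hd ξ Um) := rfl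
    have hH := dot8_expand ((σp - σm)⁻¹) Up (dirFlux pfun hd ξ Up) Um
      (dirFlux pfun hd ξ Um) (nstar vs Bs) σp σm
    -- claim-2 style bound pieces
    have hbp2 : 0 ≤ sq3 (fun k => magB Up k - Bs k) := sq3_nonneg _
    have hbm2 : 0 ≤ sq3 (fun k => magB Um k - Bs k) := sq3_nonneg _
    have hwp2 : 0 ≤ sq3 (fun k => vel Up k - vs k) := sq3_nonneg _
    have hwm2 : 0 ≤ sq3 (fun k => vel Um k - vs k) := sq3_nonneg _
    have hρep := mul_pos hρp hep
    have hρem := mul_pos hρm hem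
    have hρwp := mul_nonneg hρp.le hwp2
    have hρwm := mul_nonneg hρm.le hwm2
    have hGp0 : 0 ≤ Gp := by
      rw [hGpdef]; linarith only [hρep, hρwp, hbp2]
    have hGm0 : 0 ≤ Gm := by
      rw [hGmdef]; linarith only [hρem, hρwm, hbm2]
    have hGpb : sq3 (fun k => magB Up k - Bs k) / 2 ≤ Gp := by
      rw [hGpdef]; linarith only [hρep, hρwp]
    have hGmb : sq3 (fun k => magB Um k - Bs k) / 2 ≤ Gm := by
      rw [hGmdef]; linarith only [hρem, hρwm]
    set wb : Fin 3 → ℝ := fun k => roeV Up Um k - vs k with hwbdef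
    have hSb : |dot3 (pad hd ξ) wb| ≤ norm3 wb := by
      have h := abs_dot3_le (pad hd ξ) wb
      rwa [show norm3 (pad hd ξ) = 1 from by
        rw [norm3, pad_unit hd ξ hξ, Real.sqrt_one], one_mul] at h
    have hSp_split : Sp = dot3 (pad hd ξ) wb + (tvp - vb) := by
      rw [hSpdef, hwbdef, dot3_sub_right, dot3_sub_right, htvpdef, hvbdef,
        dirDot_pad hd ξ (vel Up), dirDot_pad hd ξ (roeV Up Um)]
      ring
    have hSm_split : Sm = dot3 (pad hd ξ) wb + (tvm - vb) := by
      rw [hSmdef, hwbdef, dot3_sub_right, dot3_sub_right, htvmdef, hvbdef,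
        dirDot_pad hd ξ (vel Um), dirDot_pad hd ξ (roeV Up Um)]
      ring
    have hdiff_id : sq3 (fun k => magB Up k - Bs k) - sq3 (fun k => magB Um k - Bs k)
        = dot3 (fun k => (magB Up k - Bs k) + (magB Um k - Bs k))
            (fun k => magB Up k - magB Um k) := by
      simp only [sq3, dot3, Fin.sum_univ_three]; ring
    have habsdiff : |sq3 (fun k => magB Up k - Bs k) - sq3 (fun k => magB Um k - Bs k)|
        ≤ (norm3 (fun k => magB Up k - Bs k) + norm3 (fun k => magB Um k - Bs k)) * nB := by
      rw [hdiff_id]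
      calc |dot3 (fun k => (magB Up k - Bs k) + (magB Um k - Bs k))
              (fun k => magB Up k - magB Um k)|
          ≤ norm3 (fun k => (magB Up k - Bs k) + (magB Um k - Bs k))
            * norm3 (fun k => magB Up k - magB Um k) := abs_dot3_le _ _
        _ ≤ (norm3 (fun k => magB Up k - Bs k) + norm3 (fun k => magB Um k - Bs k)) * nB := by
            have h1 := norm3_triangle (fun k => magB Up k - Bs k) (fun k => magB Um k - Bs k)
            have h2 : norm3 (fun k => magB Up k - magB Um k) = nB := by
              rw [hnBdef]; rfl
            rw [h2]
            exact mul_le_mul_of_nonneg_right h1 hnB0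
    have hwb_bound : (sp + sm) * norm3 wb
        ≤ sp * norm3 (fun k => vel Up k - vs k) + sm * norm3 (fun k => vel Um k - vs k) := by
      have h1 : (fun k => (sp + sm) * wb k)
          = (fun k => sp * (vel Up k - vs k) + sm * (vel Um k - vs k)) := by
        funext k
        rw [hwbdef]
        simp only [roeV, ← hspdef, ← hsmdef]
        field_simp
        ring
      calc (sp + sm) * norm3 wb = norm3 (fun k => (sp + sm) * wb k) :=
            (norm3_smul _ (by linarith) wb).symm
        _ = norm3 (fun k => sp * (vel Up k - vs k) + sm * (vel Um k - vs k)) := by rw [h1]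
        _ ≤ norm3 (fun k => sp * (vel Up k - vs k)) + norm3 (fun k => sm * (vel Um k - vs k)) :=
            norm3_triangle _ _
        _ = _ := by rw [norm3_smul sp hsp.le, norm3_smul sm hsm.le]
    have hwb' : norm3 wb ≤ (sp * norm3 (fun k => vel Up k - vs k)
        + sm * norm3 (fun k => vel Um k - vs k)) / (sp + sm) := by
      rw [le_div_iff₀ (by linarith : (0:ℝ) < sp + sm)]
      linarith [hwb_bound]
    have hGp_ge : sp ^ 2 * norm3 (fun k => vel Up k - vs k) ^ 2 / 2
        + norm3 (fun k => magB Up k - Bs k) ^ 2 / 2 ≤ Gp := by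
      rw [hGpdef, norm3_sq, norm3_sq, hspdef, Real.sq_sqrt hρp.le]
      linarith only [hρep]
    have hGm_ge : sm ^ 2 * norm3 (fun k => vel Um k - vs k) ^ 2 / 2
        + norm3 (fun k => magB Um k - Bs k) ^ 2 / 2 ≤ Gm := by
      rw [hGmdef, norm3_sq, norm3_sq, hsmdef, Real.sq_sqrt hρm.le]
      linarith only [hρem]
    -- claim 2
    have hclaim2 : -(max 0 (vb - tvp) * Gp + max 0 (tvm - vb) * Gm + μ * (Gp + Gm))
        ≤ sq3 (fun k => magB Up k - Bs k) / 2 * Sp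
          - sq3 (fun k => magB Um k - Bs k) / 2 * Sm := by
      have ha1 : sq3 (fun k => magB Up k - Bs k) / 2 * Sp
          - sq3 (fun k => magB Um k - Bs k) / 2 * Sm
          = dot3 (pad hd ξ) wb
              * ((sq3 (fun k => magB Up k - Bs k) - sq3 (fun k => magB Um k - Bs k)) / 2)
            + (tvp - vb) * (sq3 (fun k => magB Up k - Bs k) / 2)
            - (tvm - vb) * (sq3 (fun k => magB Um k - Bs k) / 2) := by
        rw [hSp_split, hSm_split]; ring
      -- bound the coupled term
      have hb1 : -(dot3 (pad hd ξ) wb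
            * ((sq3 (fun k => magB Up k - Bs k) - sq3 (fun k => magB Um k - Bs k)) / 2))
          ≤ norm3 wb * ((norm3 (fun k => magB Up k - Bs k)
              + norm3 (fun k => magB Um k - Bs k)) * nB) / 2 := by
        have h1 : |dot3 (pad hd ξ) wb
            * ((sq3 (fun k => magB Up k - Bs k) - sq3 (fun k => magB Um k - Bs k)) / 2)|
            ≤ norm3 wb * ((norm3 (fun k => magB Up k - Bs k)
                + norm3 (fun k => magB Um k - Bs k)) * nB) / 2 := by
          rw [abs_mul, abs_div, abs_two]
          have hmm := mul_le_mul hSb habsdiff (abs_nonneg _) (norm3_nonneg _)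
          linarith only [hmm]
        linarith [neg_abs_le (dot3 (pad hd ξ) wb
          * ((sq3 (fun k => magB Up k - Bs k) - sq3 (fun k => magB Um k - Bs k)) / 2)), h1]
      have hb2 : norm3 wb * ((norm3 (fun k => magB Up k - Bs k)
            + norm3 (fun k => magB Um k - Bs k)) * nB) / 2 ≤ μ * (Gp + Gm) := by
        have hXY0 : 0 ≤ (norm3 (fun k => magB Up k - Bs k)
            + norm3 (fun k => magB Um k - Bs k)) * nB :=
          mul_nonneg (add_nonneg (norm3_nonneg _) (norm3_nonneg _)) hnB0
        have h2 : norm3 wb * ((norm3 (fun k => magB Up k - Bs k)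
              + norm3 (fun k => magB Um k - Bs k)) * nB)
            ≤ ((sp * norm3 (fun k => vel Up k - vs k)
                + sm * norm3 (fun k => vel Um k - vs k)) / (sp + sm))
              * ((norm3 (fun k => magB Up k - Bs k)
                + norm3 (fun k => magB Um k - Bs k)) * nB) :=
          mul_le_mul_of_nonneg_right hwb' hXY0
        have h3 : ((sp * norm3 (fun k => vel Up k - vs k)
              + sm * norm3 (fun k => vel Um k - vs k)) / (sp + sm))
            * ((norm3 (fun k => magB Up k - Bs k)
              + norm3 (fun k => magB Um k - Bs k)) * nB) / 2
            = μ * ((sp * norm3 (fun k => vel Up k - vs k)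
                + sm * norm3 (fun k => vel Um k - vs k))
              * (norm3 (fun k => magB Up k - Bs k)
                + norm3 (fun k => magB Um k - Bs k)) / 2) := by
          rw [hμdef]
          field_simp
        have h4 : (sp * norm3 (fun k => vel Up k - vs k)
              + sm * norm3 (fun k => vel Um k - vs k))
            * (norm3 (fun k => magB Up k - Bs k)
              + norm3 (fun k => magB Um k - Bs k)) / 2 ≤ Gp + Gm := by
          nlinarith only [sq_nonneg (sp * norm3 (fun k => vel Up k - vs k)
              - norm3 (fun k => magB Up k - Bs k)),
            sq_nonneg (sp * norm3 (fun k => vel Up k - vs k)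
              - norm3 (fun k => magB Um k - Bs k)),
            sq_nonneg (sm * norm3 (fun k => vel Um k - vs k)
              - norm3 (fun k => magB Up k - Bs k)),
            sq_nonneg (sm * norm3 (fun k => vel Um k - vs k)
              - norm3 (fun k => magB Um k - Bs k)), hGp_ge, hGm_ge]
        have h5 := mul_le_mul_of_nonneg_left h4 hμ0
        linarith only [h2, h3, h5]
      have hc1 : -(max 0 (vb - tvp)) * (sq3 (fun k => magB Up k - Bs k) / 2)
          ≤ (tvp - vb) * (sq3 (fun k => magB Up k - Bs k) / 2) :=
        mul_le_mul_of_nonneg_right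
          (by linarith only [le_max_right (0:ℝ) (vb - tvp)])
          (by linarith only [hbp2])
      have hc2 : (tvm - vb) * (sq3 (fun k => magB Um k - Bs k) / 2)
          ≤ max 0 (tvm - vb) * (sq3 (fun k => magB Um k - Bs k) / 2) :=
        mul_le_mul_of_nonneg_right
          (by linarith only [le_max_right (0:ℝ) (tvm - vb)])
          (by linarith only [hbm2])
      have hc3 : max 0 (vb - tvp) * (sq3 (fun k => magB Up k - Bs k) / 2)
          ≤ max 0 (vb - tvp) * Gp := mul_le_mul_of_nonneg_left hGpb hmp0
      have hc4 : max 0 (tvm - vb) * (sq3 (fun k => magB Um k - Bs k) / 2)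
          ≤ max 0 (tvm - vb) * Gm := mul_le_mul_of_nonneg_left hGmb hmm0
      linarith only [ha1, hb1, hb2, hc1, hc2, hc3, hc4]
    -- the main estimate
    have h1 : (max 0 (vb - tvp) + waveC pfun hd ξ Up + μ) * Gp ≤ (σp - tvp) * Gp :=
      mul_le_mul_of_nonneg_right hbp hGp0
    have h2 : (max 0 (tvm - vb) + waveC pfun hd ξ Um + μ) * Gm ≤ (tvm - σm) * Gm :=
      mul_le_mul_of_nonneg_right hbm hGm0
    have hX : 0 ≤ (σp - tvp) * Gp + (tvm - σm) * Gm - Qp + Qm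
        + sq3 (fun k => magB Up k - Bs k) / 2 * Sp
        - sq3 (fun k => magB Um k - Bs k) / 2 * Sm := by
      clear_value Gp Gm Sp Sm Qp Qm
      linarith only [h1, h2, hclaim2, hQbp, hQbm, le_abs_self Qp, neg_abs_le Qm]
    have final : dot8 (hllMid pfun hd ξ Um Up σm σp) (nstar vs Bs) + sq3 Bs / 2
          + dot3 vs Bs * (σp - σm)⁻¹
            * (dot3 (pad hd ξ) (magB Up) - dot3 (pad hd ξ) (magB Um))
        = (σp - σm)⁻¹ * ((σp - tvp) * Gp + (tvm - σm) * Gm - Qp + Qm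
            + sq3 (fun k => magB Up k - Bs k) / 2 * Sp
            - sq3 (fun k => magB Um k - Bs k) / 2 * Sm) := by
      rw [hmid, hH, dirFlux_pad pfun hd ξ Up, dirFlux_pad pfun hd ξ Um, hFp, hFm,
        hGp', hGm']
      field_simp
      ring
    rw [final]
    exact mul_nonneg (inv_nonneg.mpr hΔ.le) hX
  refine ⟨hΔ, ?_, ?_, hdens, hiii, ?_⟩
  · funext i
    simp only [hllFlux, hllMid, Pi.add_apply, Pi.sub_apply, Pi.smul_apply, smul_eq_mul]
    field_simp
    ring
  · funext i
    simp only [hllFlux, hllMid, Pi.add_apply, Pi.sub_apply, Pi.smul_apply, smul_eq_mul]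
    field_simp
    ring
  · -- part (iv)
    intro hBB
    set e7 : MHDState := (fun i => if i = 7 then 1 else 0) with he7def
    have hmem : ∀ n : ℕ, (hllMid pfun hd ξ Um Up σm σp + ((n:ℝ) + 1)⁻¹ • e7) ∈ GstarSet := by
      intro n
      have hn : (0:ℝ) < ((n:ℝ) + 1)⁻¹ := by positivity
      constructor
      · show 0 < (hllMid pfun hd ξ Um Up σm σp + ((n:ℝ) + 1)⁻¹ • e7) 0
        simp only [Pi.add_apply, Pi.smul_apply, smul_eq_mul, he7def, Fin.isValue,
          Fin.reduceEq, reduceIte, mul_zero, add_zero]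
        exact hdens
      · intro vs Bs
        have h8 : dot8 (hllMid pfun hd ξ Um Up σm σp + ((n:ℝ) + 1)⁻¹ • e7) (nstar vs Bs)
            = dot8 (hllMid pfun hd ξ Um Up σm σp) (nstar vs Bs) + ((n:ℝ) + 1)⁻¹ := by
          simp only [dot8, Fin.sum_univ_eight, Pi.add_apply, Pi.smul_apply, smul_eq_mul,
            he7def, nstar, mk_apply_0, mk_apply_1, mk_apply_2, mk_apply_3, mk_apply_4,
            mk_apply_5, mk_apply_6, mk_apply_7, Fin.isValue, Fin.reduceEq, reduceIte]
          norm_num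
          ring
        have h9 := hiii vs Bs
        rw [hBB, sub_self, mul_zero, add_zero] at h9
        rw [h8]
        linarith
    have htend : Filter.Tendsto
        (fun n : ℕ => hllMid pfun hd ξ Um Up σm σp + ((n:ℝ) + 1)⁻¹ • e7)
        Filter.atTop (nhds (hllMid pfun hd ξ Um Up σm σp)) := by
      have h1 : Filter.Tendsto (fun n : ℕ => ((n:ℝ) + 1)⁻¹) Filter.atTop (nhds 0) := by
        simpa only [one_div] using tendsto_one_div_add_atTop_nhds_zero_nat (𝕜 := ℝ)
      have h2 := h1.smul_const e7
      rw [zero_smul] at h2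
      simpa using tendsto_const_nhds.add h2
    exact mem_closure_of_tendsto htend (Filter.Eventually.of_forall hmem)
end MHD
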